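/- Let A and B be nonempty finite types, each with a distinguished element 0, and write e₀ for the standard basis vector of ℂ^{A×B} at index (0,0). Let U and V be unitary matrices on ℂ^{A×B} such that U·e₀ = φ ⊗ φ' and V·e₀ = ψ ⊗ ψ' for unit vectors φ, ψ ∈ ℂ^A and φ', ψ' ∈ ℂ^B. Let SWAP_{BB'} be the permutation unitary on ℂ^{(A×B)×(A×B)} sending the basis vector at index ((a,b),(a',b')) to ((a,b'),(a',b)), and set W = (V† ⊗ I_{A×B}) · SWAP_{BB'} · (U ⊗ V). Then ∑_{(a',b') ∈ A×B} |(W(e₀ ⊗ e₀))((0,0),(a',b'))|² = |⟨ψ, φ⟩|², where ⟨ψ, φ⟩ = ∑_{a∈A} conj(ψ(a))·φ(a); i.e., for pure input states the encoded amplitude squared equals the squared fidelity |⟨φ|ψ⟩|² between the pure states φ and ψ. -/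

import Mathlib

open Matrix Kronecker Finset

noncomputable section

/-- Kronecker (tensor) product of two vectors. -/
def vecKron {I J : Type*} (x : I → ℂ) (y : J → ℂ) : I × J → ℂ := fun p => x p.1 * y p.2

/-- The permutation unitary `SWAP_{BB'}` on `ℂ^{(A×B)×(A×B)}`, sending the basis vector at
index `((a,b),(a',b'))` to the basis vector at index `((a,b'),(a',b))`. -/
def swapBB (A B : Type*) [DecidableEq A] [DecidableEq B] :
    Matrix ((A × B) × (A × B)) ((A × B) × (A × B)) ℂ :=
  Matrix.of fun i j => if i = ((j.1.1, j.2.2), (j.2.1, j.1.2)) then 1 else 0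

lemma kron_mulVec {I J K L : Type*} [Fintype K] [Fintype L]
    (M : Matrix I K ℂ) (N : Matrix J L ℂ) (x : K → ℂ) (y : L → ℂ) :
    (M ⊗ₖ N) *ᵥ vecKron x y = vecKron (M *ᵥ x) (N *ᵥ y) := by
  funext ⟨i, j⟩
  simp only [mulVec, dotProduct, vecKron, kroneckerMap_apply, Fintype.sum_prod_type,
    Finset.mul_sum, Finset.sum_mul]
  rw [Finset.sum_comm]
  refine Finset.sum_congr rfl fun l _ => Finset.sum_congr rfl fun k _ => ?_
  ring

lemma swap_mulVec {A B : Type*} [Fintype A] [Fintype B] [DecidableEq A] [DecidableEq B]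
    (z : (A × B) × (A × B) → ℂ) (a a' : A) (b b' : B) :
    (swapBB A B *ᵥ z) ((a, b), (a', b')) = z ((a, b'), (a', b)) := by
  simp only [swapBB, mulVec, dotProduct, of_apply]
  rw [Finset.sum_eq_single ((a, b'), (a', b))]
  · simp
  · rintro ⟨⟨ja, jb⟩, ⟨ja', jb'⟩⟩ _ hj
    rw [if_neg, zero_mul]
    intro h
    simp only [Prod.mk.injEq] at h
    obtain ⟨⟨h1, h2⟩, h3, h4⟩ := h
    exact hj (by simp [h1, h2, h3, h4])
  · intro h; exact absurd (Finset.mem_univ _) h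

theorem stmt12 {A B : Type*} [Fintype A] [Fintype B] [DecidableEq A] [DecidableEq B]
    [Zero A] [Zero B]
    (U V : Matrix (A × B) (A × B) ℂ)
    (hU : U ∈ Matrix.unitaryGroup (A × B) ℂ) (hV : V ∈ Matrix.unitaryGroup (A × B) ℂ)
    (φ ψ : A → ℂ) (φ' ψ' : B → ℂ)
    (hφ : ∑ a, ‖φ a‖ ^ 2 = 1) (hψ : ∑ a, ‖ψ a‖ ^ 2 = 1)
    (hφ' : ∑ b, ‖φ' b‖ ^ 2 = 1) (hψ' : ∑ b, ‖ψ' b‖ ^ 2 = 1)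
    (e0 : A × B → ℂ) (he0 : e0 = fun p => if p = ((0 : A), (0 : B)) then 1 else 0)
    (hUe0 : U *ᵥ e0 = vecKron φ φ') (hVe0 : V *ᵥ e0 = vecKron ψ ψ')
    (W : Matrix ((A × B) × (A × B)) ((A × B) × (A × B)) ℂ)
    (hW : W = (Vᴴ ⊗ₖ (1 : Matrix (A × B) (A × B) ℂ)) * swapBB A B * (U ⊗ₖ V)) :
    (∑ p : A × B, ‖(W *ᵥ vecKron e0 e0) ((((0 : A), (0 : B))), p)‖ ^ 2)
      = ‖∑ a, star (ψ a) * φ a‖ ^ 2 := by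
  -- column of V at (0,0)
  have hVcol : ∀ i : A × B, V i ((0 : A), (0 : B)) = ψ i.1 * ψ' i.2 := by
    intro i
    have := congrFun hVe0 i
    simpa [he0, mulVec, dotProduct, mul_ite, vecKron] using this
  set c : ℂ := ∑ a, star (ψ a) * φ a with hc
  -- key: explicit value of W applied vector
  have key : ∀ a' : A, ∀ b' : B,
      (W *ᵥ vecKron e0 e0) (((0 : A), (0 : B)), (a', b')) = c * (ψ a' * φ' b') := by
    intro a' b'
    have h1 : W *ᵥ vecKron e0 e0
        = (Vᴴ ⊗ₖ (1 : Matrix (A × B) (A × B) ℂ)) *ᵥ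
            (swapBB A B *ᵥ ((U ⊗ₖ V) *ᵥ vecKron e0 e0)) := by
      rw [hW, ← mulVec_mulVec, ← mulVec_mulVec]
    have h2 : (U ⊗ₖ V) *ᵥ vecKron e0 e0 = vecKron (vecKron φ φ') (vecKron ψ ψ') := by
      rw [kron_mulVec, hUe0, hVe0]
    have h3 : swapBB A B *ᵥ vecKron (vecKron φ φ') (vecKron ψ ψ')
        = vecKron (vecKron φ ψ') (vecKron ψ φ') := by
      funext ⟨⟨a, b⟩, ⟨a2, b2⟩⟩
      rw [_root_.swap_mulVec]
      simp [vecKron]; ring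
    have h4 : (Vᴴ ⊗ₖ (1 : Matrix (A × B) (A × B) ℂ)) *ᵥ vecKron (vecKron φ ψ') (vecKron ψ φ')
        = vecKron (Vᴴ *ᵥ vecKron φ ψ') (vecKron ψ φ') := by
      rw [kron_mulVec, one_mulVec]
    rw [h1, h2, h3, h4]
    have h5 : (Vᴴ *ᵥ vecKron φ ψ') ((0 : A), (0 : B)) = c := by
      have hsum : ∀ b : B, star (ψ' b) * ψ' b = ((‖ψ' b‖ ^ 2 : ℝ) : ℂ) := by
        intro b
        rw [Complex.star_def, ← Complex.normSq_eq_conj_mul_self, Complex.normSq_eq_norm_sq]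
      have : (Vᴴ *ᵥ vecKron φ ψ') ((0 : A), (0 : B))
          = ∑ a : A, ∑ b : B, star (ψ a * ψ' b) * (φ a * ψ' b) := by
        simp only [mulVec, dotProduct, conjTranspose_apply, vecKron, Fintype.sum_prod_type]
        refine Finset.sum_congr rfl fun a _ => Finset.sum_congr rfl fun b _ => ?_
        rw [hVcol]
      rw [this]
      have : ∑ a : A, ∑ b : B, star (ψ a * ψ' b) * (φ a * ψ' b)
          = (∑ a, star (ψ a) * φ a) * ∑ b, star (ψ' b) * ψ' b := by
        rw [Finset.sum_mul_sum]
        refine Finset.sum_congr rfl fun a _ => Finset.sum_congr rfl fun b _ => ?_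
        simp [star_mul']; ring
      rw [this]
      have : (∑ b, star (ψ' b) * ψ' b) = 1 := by
        rw [Finset.sum_congr rfl fun b _ => hsum b]
        push_cast [← Complex.ofReal_sum]
        norm_cast
      rw [this, mul_one]
    show (Vᴴ *ᵥ vecKron φ ψ') ((0:A),(0:B)) * vecKron ψ φ' (a', b') = _
    rw [h5]; simp [vecKron]
  -- sum up
  calc (∑ p : A × B, ‖(W *ᵥ vecKron e0 e0) ((((0 : A), (0 : B))), p)‖ ^ 2)
      = ∑ a' : A, ∑ b' : B, ‖c‖ ^ 2 * (‖ψ a'‖ ^ 2 * ‖φ' b'‖ ^ 2) := by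
        rw [Fintype.sum_prod_type]
        refine Finset.sum_congr rfl fun a' _ => Finset.sum_congr rfl fun b' _ => ?_
        rw [key a' b', norm_mul, norm_mul, mul_pow, mul_pow]
    _ = ‖c‖ ^ 2 := by
        simp only [← Finset.mul_sum, ← Finset.sum_mul, hψ, hφ']
        ring
        
end
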